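/- Let (φ, ψ) be an n×n matrix factorization of f ∈ K[[x]] and (φ', ψ') an m×m matrix factorization of g ∈ K[[y]]. Then the variant Yoshino tensor product given by the block matrices ( [[I_n⊗φ', ψ⊗I_m], [φ⊗I_m, -I_n⊗ψ']], [[I_n⊗ψ', ψ⊗I_m], [φ⊗I_m, -I_n⊗φ']] ) is a 2nm×2nm matrix factorization of f + g over K[[x,y]]. -/
import Mathlib


open Matrix Kronecker

/-- The variant Yoshino tensor product `⊗̂'` yields a `2nm×2nm` matrix
factorization of `f + g`. -/
theorem yoshino_tensor_variant_is_matrix_factorization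
    {K : Type*} [Field K] {σ τ : Type*} {n m : ℕ}
    (f g : MvPowerSeries (σ ⊕ τ) K)
    (φ ψ : Matrix (Fin n) (Fin n) (MvPowerSeries (σ ⊕ τ) K))
    (φ' ψ' : Matrix (Fin m) (Fin m) (MvPowerSeries (σ ⊕ τ) K))
    (h1 : φ * ψ = f • 1) (h2 : ψ * φ = f • 1)
    (h3 : φ' * ψ' = g • 1) (h4 : ψ' * φ' = g • 1) :
    fromBlocks (1 ⊗ₖ φ') (ψ ⊗ₖ 1) (φ ⊗ₖ 1) (-(1 ⊗ₖ ψ')) *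
        fromBlocks (1 ⊗ₖ ψ') (ψ ⊗ₖ 1) (φ ⊗ₖ 1) (-(1 ⊗ₖ φ')) = (f + g) • 1 ∧
    fromBlocks (1 ⊗ₖ ψ') (ψ ⊗ₖ 1) (φ ⊗ₖ 1) (-(1 ⊗ₖ φ')) *
        fromBlocks (1 ⊗ₖ φ') (ψ ⊗ₖ 1) (φ ⊗ₖ 1) (-(1 ⊗ₖ ψ')) = (f + g) • 1 := by
  have e : ((f + g) • (1 : Matrix (Fin n × Fin m ⊕ Fin n × Fin m) (Fin n × Fin m ⊕ Fin n × Fin m) (MvPowerSeries (σ ⊕ τ) K)))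
      = fromBlocks ((f + g) • 1) 0 0 ((f + g) • 1) := by
    rw [← Matrix.fromBlocks_one, Matrix.fromBlocks_smul, smul_zero]
  constructor <;>
  · rw [Matrix.fromBlocks_multiply, e]
    congr 1 <;> try congr 1
    all_goals
      simp only [← Matrix.mul_kronecker_mul, mul_neg, neg_mul, Matrix.one_mul, Matrix.mul_one,
        h1, h2, h3, h4, Matrix.smul_kronecker, Matrix.kronecker_smul, Matrix.one_kronecker_one,
        neg_neg, add_smul]
    all_goals abel
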